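/- Under the assumptions of the previous inference setup, if additionally |Σ_i β_i γ_i| ≥ 2/(3λ√(10d)), then the relative margin is approximated within a factor of 2: (1/2)|Σ_i β_i γ_i| ≤ |⟨y,h⟩/⟨x_ref,h⟩| ≤ 2|Σ_i β_i γ_i|. -/

import Mathlib

open scoped RealInnerProductSpace BigOperators

/-- under the same inference setup with `|Σβ_iγ_i| ≥ 2/(3λ√(10d))`,
the relative margin `⟪y,h⟫/⟪x_ref,h⟫` is approximated by `Σβ_iγ_i` within a factor of 2. -/
theorem stmt_16 (d e : ℕ) (hd : 0 < d) (he : e ≤ d)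
    (h y xref : EuclideanSpace ℝ (Fin d)) (hh : ‖h‖ = 1) (hy1 : ‖y‖ = 1)
    (hxref : ⟪xref, h⟫ ≠ 0) (lam : ℝ) (hlam : 1 ≤ lam)
    (v : Fin (d - e) → EuclideanSpace ℝ (Fin d))
    (w : Fin e → EuclideanSpace ℝ (Fin d))
    (horth : Orthonormal ℝ (Sum.elim v w))
    (α : Fin (d - e) → ℝ) (β : Fin e → ℝ)
    (hy : y = ∑ i, α i • v i + ∑ i, β i • w i)
    (hv : ∀ i, |⟪v i, h⟫| ≤ (|⟪xref, h⟫| / (lam * Real.sqrt (10 * d))) / (3 * d))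
    (γ δ : Fin e → ℝ)
    (hw : ∀ i, ⟪w i, h⟫ = ⟪xref, h⟫ * (γ i + δ i))
    (hδ : ∀ i, |δ i| ≤ 1 / (3 * Real.sqrt 10 * lam * (d * Real.sqrt d)))
    (hbig : 2 / (3 * lam * Real.sqrt (10 * d)) ≤ |∑ i, β i * γ i|) :
    (1 / 2) * |∑ i, β i * γ i| ≤ |⟪y, h⟫ / ⟪xref, h⟫| ∧
    |⟪y, h⟫ / ⟪xref, h⟫| ≤ 2 * |∑ i, β i * γ i| := by
  classical
  set xh : ℝ := ⟪xref, h⟫ with hxh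
  have hxa : 0 < |xh| := abs_pos.mpr hxref
  have hdpos : (0:ℝ) < d := by exact_mod_cast hd
  have hlam0 : (0:ℝ) < lam := lt_of_lt_of_le one_pos hlam
  have hsq10d : 0 < Real.sqrt (10 * d) := Real.sqrt_pos.mpr (by positivity)
  have hsqd : 0 < Real.sqrt d := Real.sqrt_pos.mpr hdpos
  have hsq10 : (0:ℝ) < Real.sqrt 10 := Real.sqrt_pos.mpr (by norm_num)
  have hsplit : Real.sqrt (10 * d) = Real.sqrt 10 * Real.sqrt d :=
    Real.sqrt_mul (by norm_num) _
  -- coefficients and error terms over the sum type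
  set a : Fin (d - e) ⊕ Fin e → ℝ := Sum.elim α β with ha
  set c : Fin (d - e) ⊕ Fin e → ℝ := Sum.elim (fun i => ⟪v i, h⟫ / xh) δ with hc
  set S : ℝ := ∑ i, β i * γ i with hS
  set E : ℝ := ∑ i, a i * c i with hE
  set M : ℝ := 1 / (3 * lam * d * Real.sqrt (10 * d)) with hM
  have hMpos : 0 < M := by positivity
  -- rewrite y
  have hy' : y = ∑ i, a i • Sum.elim v w i := by
    rw [hy, Fintype.sum_sum_type]; simp [ha]
  -- coefficients have unit norm
  have hnorm : ∑ i, a i ^ 2 = 1 := by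
    have h1 : ⟪y, y⟫ = ∑ i, a i * a i := by
      rw [hy']
      simpa using horth.inner_sum a a Finset.univ
    have h2 : ⟪y, y⟫ = 1 := by
      rw [real_inner_self_eq_norm_sq, hy1]; norm_num
    rw [h2] at h1
    simp_rw [← sq] at h1
    exact h1.symm
  -- the ratio decomposes
  have hEq : ⟪y, h⟫ / xh = S + E := by
    have hy'' : ⟪y, h⟫ = ∑ i, a i * ⟪Sum.elim v w i, h⟫ := by
      rw [hy', sum_inner]
      simp_rw [real_inner_smul_left]
    rw [hy'', Finset.sum_div, hE, Fintype.sum_sum_type, Fintype.sum_sum_type]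
    have hL : ∀ i : Fin (d - e),
        a (Sum.inl i) * ⟪Sum.elim v w (Sum.inl i), h⟫ / xh
          = a (Sum.inl i) * c (Sum.inl i) := by
      intro i; simp [ha, hc, mul_div_assoc]
    have hR : ∀ i : Fin e,
        a (Sum.inr i) * ⟪Sum.elim v w (Sum.inr i), h⟫ / xh
          = β i * γ i + a (Sum.inr i) * c (Sum.inr i) := by
      intro i
      simp only [ha, hc, Sum.elim_inr, hw i, ← hxh]
      field_simp
    calc (∑ i, a (Sum.inl i) * ⟪Sum.elim v w (Sum.inl i), h⟫ / xh)
          + ∑ i, a (Sum.inr i) * ⟪Sum.elim v w (Sum.inr i), h⟫ / xh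
        = (∑ i, a (Sum.inl i) * c (Sum.inl i))
            + ∑ i, (β i * γ i + a (Sum.inr i) * c (Sum.inr i)) := by
          rw [Finset.sum_congr rfl fun i _ => hL i, Finset.sum_congr rfl fun i _ => hR i]
      _ = S + ((∑ i, a (Sum.inl i) * c (Sum.inl i))
            + ∑ i, a (Sum.inr i) * c (Sum.inr i)) := by
          rw [Finset.sum_add_distrib]; ring
  -- each error coefficient is bounded by M
  have hcM : ∀ i, |c i| ≤ M := by
    rintro (i | i)
    · have := hv i
      have : |⟪v i, h⟫| / |xh| ≤ (|xh| / (lam * Real.sqrt (10 * d))) / (3 * d) / |xh| := by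
        exact div_le_div_of_nonneg_right this hxa.le |>.trans_eq rfl
      calc |c (Sum.inl i)| = |⟪v i, h⟫| / |xh| := by
            simp [hc, abs_div, hxh]
        _ ≤ (|xh| / (lam * Real.sqrt (10 * d))) / (3 * d) / |xh| := this
        _ = M := by rw [hM]; field_simp
    · have := hδ i
      calc |c (Sum.inr i)| = |δ i| := by simp [hc]
        _ ≤ 1 / (3 * Real.sqrt 10 * lam * (d * Real.sqrt d)) := this
        _ = M := by rw [hM, hsplit]; ring_nf
  -- Cauchy–Schwarz bound on the error
  have hEbound : |E| ≤ Real.sqrt d * M := by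
    have hcs := Finset.sum_mul_sq_le_sq_mul_sq Finset.univ a c
    have hc2 : (∑ i, c i ^ 2) ≤ d * M ^ 2 := by
      have : ∀ i ∈ (Finset.univ : Finset (Fin (d - e) ⊕ Fin e)), c i ^ 2 ≤ M ^ 2 := by
        intro i _
        have := hcM i
        calc c i ^ 2 = |c i| ^ 2 := (sq_abs _).symm
          _ ≤ M ^ 2 := by nlinarith [abs_nonneg (c i)]
      calc (∑ i, c i ^ 2) ≤ ∑ _i : Fin (d - e) ⊕ Fin e, M ^ 2 :=
            Finset.sum_le_sum this
        _ = ((d - e) + e : ℕ) * M ^ 2 := by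
            simp [Finset.card_univ, mul_comm]
        _ = d * M ^ 2 := by rw [Nat.sub_add_cancel he]
    have hE2 : E ^ 2 ≤ d * M ^ 2 := by
      calc E ^ 2 ≤ (∑ i, a i ^ 2) * ∑ i, c i ^ 2 := hcs
        _ = ∑ i, c i ^ 2 := by rw [hnorm, one_mul]
        _ ≤ d * M ^ 2 := hc2
    have : |E| ≤ Real.sqrt (d * M ^ 2) := by
      rw [← Real.sqrt_sq_eq_abs]
      exact Real.sqrt_le_sqrt hE2
    calc |E| ≤ Real.sqrt (d * M ^ 2) := this
      _ = Real.sqrt d * M := by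
          rw [Real.sqrt_mul (le_of_lt hdpos), Real.sqrt_sq hMpos.le]
  -- √d * M ≤ 1/(3 λ √(10d))
  have hkey : Real.sqrt d * M ≤ 1 / (3 * lam * Real.sqrt (10 * d)) := by
    rw [hM, mul_one_div, div_le_div_iff₀ (by positivity) (by positivity)]
    have h1d : (1:ℝ) ≤ d := by exact_mod_cast hd
    have hsd : Real.sqrt d ≤ d := by
      nlinarith [Real.sq_sqrt hdpos.le, Real.sqrt_nonneg (d:ℝ)]
    calc Real.sqrt d * (3 * lam * Real.sqrt (10 * d))
        ≤ (d : ℝ) * (3 * lam * Real.sqrt (10 * d)) :=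
          mul_le_mul_of_nonneg_right hsd (by positivity)
      _ = 1 * (3 * lam * d * Real.sqrt (10 * d)) := by ring
  have hES : |E| ≤ |S| / 2 := by
    have h1 := hEbound.trans hkey
    have h2 : 2 / (3 * lam * Real.sqrt (10 * d))
        = 2 * (1 / (3 * lam * Real.sqrt (10 * d))) := by ring
    rw [h2] at hbig
    linarith
  rw [hEq]
  constructor
  · have : |S| ≤ |S + E| + |E| := by
      calc |S| = |(S + E) + (-E)| := by ring_nf
        _ ≤ |S + E| + |(-E)| := abs_add_le _ _
        _ = |S + E| + |E| := by rw [abs_neg]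
    linarith
  · calc |S + E| ≤ |S| + |E| := abs_add_le _ _
      _ ≤ 2 * |S| := by linarith [abs_nonneg S]
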